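/- Let {Λ_i}_{i∈I} be a g-frame for a finite-dimensional Hilbert space H with g-frame operator S. For every Parseval g-frame {Γ_i}, one has ∑_i ‖Λ_i − Γ_i‖_F² ≥ ∑_i ‖Λ_i − Λ_i S^{-1/2}‖_F², with equality if and only if Γ_i = Λ_i S^{-1/2} for all i. -/

import Mathlib

/-- The Hilbert–Schmidt norm squared `‖T‖_F²` of an operator on a finite-dimensional
Hilbert space. -/
noncomputable def hsNormSq {H K : Type*} [NormedAddCommGroup H] [InnerProductSpace ℂ H]
    [FiniteDimensional ℂ H] [NormedAddCommGroup K] [InnerProductSpace ℂ K]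
    (T : H →L[ℂ] K) : ℝ :=
  ∑ k, ‖T (stdOrthonormalBasis ℂ H k)‖ ^ 2

set_option maxHeartbeats 2000000

section Aux

variable {H : Type*} [NormedAddCommGroup H] [InnerProductSpace ℂ H] [FiniteDimensional ℂ H]

/-- Trace of an operator via an orthonormal basis. -/
lemma aux_sum_inner_eq_trace {ι : Type*} [Fintype ι] [DecidableEq ι]
    (b : OrthonormalBasis ι ℂ H) (M : H →L[ℂ] H) :
    ∑ k, inner (𝕜 := ℂ) (b k) (M (b k)) = LinearMap.trace ℂ H (M : H →ₗ[ℂ] H) := by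
  rw [LinearMap.trace_eq_matrix_trace ℂ b.toBasis, Matrix.trace]
  simp [Matrix.diag, LinearMap.toMatrix_apply, OrthonormalBasis.coe_toBasis,
    OrthonormalBasis.coe_toBasis_repr_apply, OrthonormalBasis.repr_apply_apply]

/-- Cyclic invariance of the trace, in the form needed below. -/
lemma aux_cyc {ι : Type*} [Fintype ι] [DecidableEq ι]
    (b : OrthonormalBasis ι ℂ H) (T Q : H →L[ℂ] H) :
    ∑ k, inner (𝕜 := ℂ) (b k) (Q (Q (T (b k))))
      = ∑ k, inner (𝕜 := ℂ) (b k) (Q (T (Q (b k)))) := by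
  have h1 := aux_sum_inner_eq_trace b ((Q ∘L Q) ∘L T)
  have h2 := aux_sum_inner_eq_trace b ((Q ∘L T) ∘L Q)
  simp only [ContinuousLinearMap.comp_apply] at h1 h2
  rw [h1, h2]
  simp only [ContinuousLinearMap.toLinearMap_comp]
  rw [← Module.End.mul_eq_comp, ← Module.End.mul_eq_comp, ← Module.End.mul_eq_comp,
    ← Module.End.mul_eq_comp, mul_assoc, LinearMap.trace_mul_comm]

end Aux

/-- For a g-frame `{Λ i}` with frame operator `S` and any Parseval g-frame `{Γ i}`:
`∑ i ‖Λ i − Γ i‖_F² ≥ ∑ i ‖Λ i − Λ i S^{-1/2}‖_F²`, with equality iff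
`Γ i = Λ i S^{-1/2}` for all `i`. -/
theorem gframe_parseval_best_approx
    {H K : Type*} [NormedAddCommGroup H] [InnerProductSpace ℂ H] [FiniteDimensional ℂ H]
    [NormedAddCommGroup K] [InnerProductSpace ℂ K] [CompleteSpace K]
    {I : Type*} (Λ : I → (H →L[ℂ] K)) (S : H →L[ℂ] H)
    (A B : ℝ) (hA : 0 < A) (hB : 0 < B)
    (hsum : ∀ x : H, Summable fun i => ‖Λ i x‖ ^ 2)
    (hlow : ∀ x : H, A * ‖x‖ ^ 2 ≤ ∑' i, ‖Λ i x‖ ^ 2)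
    (hup : ∀ x : H, ∑' i, ‖Λ i x‖ ^ 2 ≤ B * ‖x‖ ^ 2)
    (hS : ∀ x : H, HasSum (fun i => (Λ i).adjoint (Λ i x)) (S x))
    (Γ : I → (H →L[ℂ] K))
    (hΓ : ∀ x : H, HasSum (fun i => ‖Γ i x‖ ^ 2) (‖x‖ ^ 2)) :
    (∑' i, hsNormSq (Λ i - (Λ i) ∘L cfc (fun t : ℝ => t ^ (-(1/2 : ℝ))) S))
      ≤ ∑' i, hsNormSq (Λ i - Γ i) ∧
    ((∑' i, hsNormSq (Λ i - Γ i)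
        = ∑' i, hsNormSq (Λ i - (Λ i) ∘L cfc (fun t : ℝ => t ^ (-(1/2 : ℝ))) S))
      ↔ ∀ i, Γ i = (Λ i) ∘L cfc (fun t : ℝ => t ^ (-(1/2 : ℝ))) S) := by
  classical
  -- basic summation facts
  have hbil : ∀ x y : H, HasSum (fun i => inner (𝕜 := ℂ) (Λ i x) (Λ i y))
      (inner (𝕜 := ℂ) x (S y)) := by
    intro x y
    have h := (hS y).mapL (innerSL ℂ x)
    simpa only [innerSL_apply_apply, ContinuousLinearMap.adjoint_inner_right] using h
  have hquad : ∀ x : H, HasSum (fun i => (‖Λ i x‖ ^ 2 : ℝ))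
      (RCLike.re (inner (𝕜 := ℂ) x (S x))) := by
    intro x
    have h := (hbil x x).map (RCLike.re (K := ℂ)) RCLike.continuous_re
    simpa only [Function.comp_def, inner_self_eq_norm_sq] using h
  -- S is self-adjoint
  have hSA : IsSelfAdjoint S := by
    rw [ContinuousLinearMap.isSelfAdjoint_iff_isSymmetric]
    intro x y
    have h2 := (hbil y x).map (starRingEnd ℂ) (RCLike.continuous_conj)
    have h3 : (fun i => (starRingEnd ℂ) (inner (𝕜 := ℂ) (Λ i y) (Λ i x)))
        = fun i => inner (𝕜 := ℂ) (Λ i x) (Λ i y) := by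
      funext i; exact inner_conj_symm _ _
    rw [Function.comp_def, h3, inner_conj_symm] at h2
    exact h2.unique (hbil x y)
  -- quadratic lower bound
  have hlow' : ∀ x : H, A * ‖x‖ ^ 2 ≤ RCLike.re (inner (𝕜 := ℂ) x (S x)) := by
    intro x
    rw [← (hquad x).tsum_eq]; exact hlow x
  -- the spectrum of `S` is contained in `[A, ∞)`
  have hspec : spectrum ℝ S ⊆ Set.Ici A := by
    intro r hr
    by_contra hrA
    rw [Set.mem_Ici, not_le] at hrA
    have hunit : IsUnit (algebraMap ℝ (H →L[ℂ] H) r - S) := by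
      rw [ContinuousLinearMap.isUnit_iff_bijective]
      have hinj : Function.Injective (algebraMap ℝ (H →L[ℂ] H) r - S) := by
        intro x y hxy
        rw [← sub_eq_zero, ← map_sub] at hxy
        set z := x - y with hz
        have hx' : r • z - S z = 0 := by
          simpa [Algebra.algebraMap_eq_smul_one, ContinuousLinearMap.sub_apply,
            ContinuousLinearMap.smul_apply] using hxy
        have hSz : S z = r • z := by rw [sub_eq_zero] at hx'; exact hx'.symm
        have h1 : RCLike.re (inner (𝕜 := ℂ) z (S z)) = r * ‖z‖ ^ 2 := by
          have hz2 : (r : ℝ) • z = ((r : ℂ)) • z := RCLike.real_smul_eq_coe_smul r z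
          rw [hSz, hz2, inner_smul_right, inner_self_eq_norm_sq_to_K]
          simp [RCLike.mul_re, ← Complex.ofReal_pow]
        have h2 := hlow' z
        rw [h1] at h2
        have hz0 : z = 0 := by
          by_contra hzne
          have hzpos : 0 < ‖z‖ ^ 2 := by
            have := norm_pos_iff.mpr hzne; positivity
          nlinarith
        rw [← sub_eq_zero]; exact hz0
      refine ⟨hinj, ?_⟩
      exact (LinearMap.injective_iff_surjective
        (f := ((algebraMap ℝ (H →L[ℂ] H) r - S : H →L[ℂ] H) : H →ₗ[ℂ] H))).mp hinj
    exact (spectrum.mem_iff.mp hr) hunit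
  have hspec' : ∀ t ∈ spectrum ℝ S, 0 < t := fun t ht => lt_of_lt_of_le hA (hspec ht)
  -- functional calculus
  set f : ℝ → ℝ := fun t => t ^ (-(1/2 : ℝ)) with hf_def
  set q : ℝ → ℝ := fun t => Real.sqrt (Real.sqrt t) with hq_def
  have hfc : ContinuousOn f (spectrum ℝ S) := fun t ht =>
    (Real.continuousAt_rpow_const t _ (Or.inl (ne_of_gt (hspec' t ht)))).continuousWithinAt
  have hgc : ContinuousOn Real.sqrt (spectrum ℝ S) := Real.continuous_sqrt.continuousOn
  have hqc : ContinuousOn q (spectrum ℝ S) :=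
    (Real.continuous_sqrt.comp Real.continuous_sqrt).continuousOn
  have hqic : ContinuousOn (fun t => (q t)⁻¹) (spectrum ℝ S) := by
    refine hqc.inv₀ fun t ht => ?_
    have := hspec' t ht
    simp only [hq_def]
    positivity
  set R : H →L[ℂ] H := cfc f S with hR_def
  set Sh : H →L[ℂ] H := cfc Real.sqrt S with hSh_def
  set Q : H →L[ℂ] H := cfc q S with hQ_def
  set Qi : H →L[ℂ] H := cfc (fun t => (q t)⁻¹) S with hQi_def
  have hRsa : IsSelfAdjoint R := cfc_predicate f S
  have hQsa : IsSelfAdjoint Q := cfc_predicate q S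
  have hsymm : ∀ (T : H →L[ℂ] H), IsSelfAdjoint T → ∀ u v : H,
      inner (𝕜 := ℂ) (T u) v = inner (𝕜 := ℂ) u (T v) := fun T hT u v => hT.isSymmetric u v
  have hid : cfc (fun t : ℝ => t) S = S := cfc_id' ℝ S
  have hmul : ∀ (u v : ℝ → ℝ), ContinuousOn u (spectrum ℝ S) → ContinuousOn v (spectrum ℝ S) →
      cfc u S * cfc v S = cfc (fun t => u t * v t) S := fun u v hu hv =>
    (cfc_mul u v S hu hv).symm
  -- pointwise facts on the spectrum
  have hfmulf : ∀ t ∈ spectrum ℝ S, f t * f t = t⁻¹ := by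
    intro t ht
    have ht' := hspec' t ht
    show t ^ (-(1/2 : ℝ)) * t ^ (-(1/2 : ℝ)) = t⁻¹
    rw [← Real.rpow_add ht', show (-(1/2 : ℝ) + -(1/2 : ℝ)) = (-1 : ℝ) by norm_num,
      Real.rpow_neg_one]
  have hRS : R * S = cfc (fun t : ℝ => f t * t) S := by
    rw [hR_def]
    nth_rewrite 2 [← hid]
    exact (hmul f (fun t : ℝ => t) hfc continuous_id.continuousOn)
  have hRSR : R * S * R = 1 := by
    rw [hRS, hR_def, hmul (fun t : ℝ => f t * t) f (hfc.mul continuous_id.continuousOn) hfc]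
    rw [show (1 : H →L[ℂ] H) = cfc (fun _ : ℝ => (1 : ℝ)) S from (cfc_const_one ℝ S).symm]
    refine cfc_congr fun t ht => ?_
    have ht' := hspec' t ht
    have h := hfmulf t ht
    show f t * t * f t = 1
    calc f t * t * f t = t * (f t * f t) := by ring
      _ = t * t⁻¹ := by rw [h]
      _ = 1 := mul_inv_cancel₀ (ne_of_gt ht')
  have hRSh : R * Sh = 1 := by
    rw [hR_def, hSh_def, hmul f _ hfc hgc]
    rw [show (1 : H →L[ℂ] H) = cfc (fun _ : ℝ => (1 : ℝ)) S from (cfc_const_one ℝ S).symm]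
    refine cfc_congr fun t ht => ?_
    have ht' := hspec' t ht
    show f t * Real.sqrt t = 1
    rw [Real.sqrt_eq_rpow]
    show t ^ (-(1/2 : ℝ)) * t ^ (1/2 : ℝ) = 1
    rw [← Real.rpow_add ht', show (-(1/2 : ℝ) + 1/2) = (0 : ℝ) by norm_num, Real.rpow_zero]
  have hSR : S * R = Sh := by
    rw [hR_def, hSh_def]
    nth_rewrite 1 [← hid]
    rw [hmul (fun t : ℝ => t) f continuous_id.continuousOn hfc]
    refine cfc_congr fun t ht => ?_
    have ht' := hspec' t ht
    show t * f t = Real.sqrt t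
    rw [Real.sqrt_eq_rpow]
    show t * t ^ (-(1/2 : ℝ)) = t ^ (1/2 : ℝ)
    nth_rewrite 1 [← Real.rpow_one t]
    rw [← Real.rpow_add ht', show ((1 : ℝ) + -(1/2)) = (1/2 : ℝ) by norm_num]
  have hQQ : Q * Q = Sh := by
    rw [hQ_def, hSh_def, hmul q q hqc hqc]
    refine cfc_congr fun t ht => ?_
    show q t * q t = Real.sqrt t
    exact Real.mul_self_sqrt (Real.sqrt_nonneg t)
  have hQQi : Q * Qi = 1 := by
    rw [hQ_def, hQi_def, hmul _ _ hqc hqic]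
    rw [show (1 : H →L[ℂ] H) = cfc (fun _ : ℝ => (1 : ℝ)) S from (cfc_const_one ℝ S).symm]
    refine cfc_congr fun t ht => ?_
    have ht' := hspec' t ht
    show q t * (q t)⁻¹ = 1
    refine mul_inv_cancel₀ ?_
    simp only [hq_def]
    positivity
  -- operator-level factorization
  have hΛfact : ∀ i, (Λ i ∘L R) ∘L Sh = Λ i := by
    intro i
    rw [ContinuousLinearMap.comp_assoc, ← ContinuousLinearMap.mul_def R Sh, hRSh,
      ContinuousLinearMap.one_def, ContinuousLinearMap.comp_id]
  -- the canonical Parseval frame Θ i = Λ i ∘L R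
  have hΘquad : ∀ x : H, HasSum (fun i => ‖(Λ i ∘L R) x‖ ^ 2) (‖x‖ ^ 2) := by
    intro x
    have h := hquad (R x)
    have hval : RCLike.re (inner (𝕜 := ℂ) (R x) (S (R x))) = ‖x‖ ^ 2 := by
      rw [hsymm R hRsa (x) (S (R x))]
      have h2 : R (S (R x)) = (R * S * R) x := by
        simp [ContinuousLinearMap.mul_apply]
      rw [h2, hRSR]
      simp [inner_self_eq_norm_sq, ← Complex.ofReal_pow]
    rw [hval] at h
    simpa only [ContinuousLinearMap.comp_apply] using h
  have hΘbil : ∀ x y : H, HasSum (fun i => inner (𝕜 := ℂ) (Λ i x) ((Λ i ∘L R) y))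
      (inner (𝕜 := ℂ) x (Sh y)) := by
    intro x y
    have h := hbil x (R y)
    have h5 : S (R y) = Sh y := by rw [← hSR, ContinuousLinearMap.mul_apply]
    rw [h5] at h
    simpa only [ContinuousLinearMap.comp_apply] using h
  -- summability of mixed inner products
  have hmix : ∀ (u v : I → K), Summable (fun i => ‖u i‖ ^ 2) → Summable (fun i => ‖v i‖ ^ 2) →
      Summable (fun i => inner (𝕜 := ℂ) (u i) (v i)) := by
    intro u v hu hv
    refine Summable.of_norm_bounded (hu.add hv) fun i => ?_
    have hab : ‖inner (𝕜 := ℂ) (u i) (v i)‖ ≤ ‖u i‖ * ‖v i‖ := norm_inner_le_norm _ _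
    have key : ‖u i‖ * ‖v i‖ ≤ ‖u i‖ ^ 2 + ‖v i‖ ^ 2 := by
      nlinarith [sq_nonneg (‖u i‖ - ‖v i‖)]
    exact le_trans hab key
  -- expansion of `‖u i - v i‖²`
  have hexp : ∀ (u v : I → K) (su sv : ℝ), HasSum (fun i => ‖u i‖ ^ 2) su →
      HasSum (fun i => ‖v i‖ ^ 2) sv →
      HasSum (fun i => ‖u i - v i‖ ^ 2)
        (su + sv - 2 * RCLike.re (∑' i, inner (𝕜 := ℂ) (u i) (v i))) := by
    intro u v su sv hu hv
    have hsummix := hmix u v hu.summable hv.summable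
    have h3 : HasSum (fun i => RCLike.re (inner (𝕜 := ℂ) (u i) (v i)))
        (RCLike.re (∑' i, inner (𝕜 := ℂ) (u i) (v i))) :=
      hsummix.hasSum.map (RCLike.re (K := ℂ)) RCLike.continuous_re
    have h4 := (hu.add hv).sub (h3.mul_left 2)
    have heq : (fun i => ‖u i - v i‖ ^ 2)
        = fun i => ‖u i‖ ^ 2 + ‖v i‖ ^ 2 - 2 * RCLike.re (inner (𝕜 := ℂ) (u i) (v i)) := by
      funext i
      rw [norm_sub_sq (𝕜 := ℂ)]
      ring
    rw [heq]
    exact h4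
  -- the orthonormal basis
  set e := stdOrthonormalBasis ℂ H with he_def
  have hek : ∀ k, ‖e k‖ ^ 2 = 1 := by
    intro k
    rw [e.orthonormal.1 k]; norm_num
  -- per-basis-vector sums
  have ha : ∀ k, HasSum (fun i => ‖(Λ i - Γ i) (e k)‖ ^ 2)
      (RCLike.re (inner (𝕜 := ℂ) (e k) (S (e k))) + 1
        - 2 * RCLike.re (∑' i, inner (𝕜 := ℂ) (Λ i (e k)) (Γ i (e k)))) := by
    intro k
    have h := hexp (fun i => Λ i (e k)) (fun i => Γ i (e k)) _ _ (hquad (e k))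
      (hΓ (e k))
    rw [hek k] at h
    simpa only [ContinuousLinearMap.sub_apply] using h
  have hb : ∀ k, HasSum (fun i => ‖(Λ i - Λ i ∘L R) (e k)‖ ^ 2)
      (RCLike.re (inner (𝕜 := ℂ) (e k) (S (e k))) + 1
        - 2 * RCLike.re (inner (𝕜 := ℂ) (e k) (Sh (e k)))) := by
    intro k
    have h := hexp (fun i => Λ i (e k)) (fun i => (Λ i ∘L R) (e k)) _ _ (hquad (e k))
      (hΘquad (e k))
    rw [hek k, (hΘbil (e k) (e k)).tsum_eq] at h
    simpa only [ContinuousLinearMap.sub_apply] using h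
  have hc : ∀ k, HasSum (fun i => ‖((Λ i ∘L R) - Γ i) (Q (e k))‖ ^ 2)
      (‖Q (e k)‖ ^ 2 + ‖Q (e k)‖ ^ 2
        - 2 * RCLike.re (∑' i, inner (𝕜 := ℂ) ((Λ i ∘L R) (Q (e k))) (Γ i (Q (e k))))) := by
    intro k
    have h := hexp (fun i => (Λ i ∘L R) (Q (e k))) (fun i => Γ i (Q (e k))) _ _
      (hΘquad (Q (e k))) (hΓ (Q (e k)))
    simpa only [ContinuousLinearMap.sub_apply] using h
  -- trace identity: for each i
  have htr : ∀ i, (∑ k, inner (𝕜 := ℂ) (Λ i (e k)) (Γ i (e k)))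
      = ∑ k, inner (𝕜 := ℂ) ((Λ i ∘L R) (Q (e k))) (Γ i (Q (e k))) := by
    intro i
    set T : H →L[ℂ] H := (ContinuousLinearMap.adjoint (Λ i ∘L R)) ∘L Γ i with hT_def
    have hL : ∀ k, inner (𝕜 := ℂ) (Λ i (e k)) (Γ i (e k))
        = inner (𝕜 := ℂ) (e k) (Q (Q (T (e k)))) := by
      intro k
      conv_lhs => rw [← hΛfact i]
      rw [show ((Λ i ∘L R) ∘L Sh) (e k) = (Λ i ∘L R) (Sh (e k)) from rfl]
      rw [← ContinuousLinearMap.adjoint_inner_right]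
      rw [show (ContinuousLinearMap.adjoint (Λ i ∘L R)) (Γ i (e k)) = T (e k) from rfl]
      have hSh_apply : Sh (e k) = Q (Q (e k)) := by
        rw [← hQQ, ContinuousLinearMap.mul_apply]
      rw [hSh_apply]
      rw [hsymm Q hQsa (Q (e k)) (T (e k)), hsymm Q hQsa (e k) (Q (T (e k)))]
    have hR' : ∀ k, inner (𝕜 := ℂ) ((Λ i ∘L R) (Q (e k))) (Γ i (Q (e k)))
        = inner (𝕜 := ℂ) (e k) (Q (T (Q (e k)))) := by
      intro k
      rw [← ContinuousLinearMap.adjoint_inner_right]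
      rw [show (ContinuousLinearMap.adjoint (Λ i ∘L R)) (Γ i (Q (e k))) = T (Q (e k)) from rfl]
      rw [hsymm Q hQsa (e k) (T (Q (e k)))]
    calc (∑ k, inner (𝕜 := ℂ) (Λ i (e k)) (Γ i (e k)))
        = ∑ k, inner (𝕜 := ℂ) (e k) (Q (Q (T (e k)))) := Finset.sum_congr rfl fun k _ => hL k
      _ = ∑ k, inner (𝕜 := ℂ) (e k) (Q (T (Q (e k)))) := aux_cyc e T Q
      _ = ∑ k, inner (𝕜 := ℂ) ((Λ i ∘L R) (Q (e k))) (Γ i (Q (e k))) :=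
          Finset.sum_congr rfl fun k _ => (hR' k).symm
  -- summability of the mixed series
  have hPsum : ∀ k, Summable (fun i => inner (𝕜 := ℂ) (Λ i (e k)) (Γ i (e k))) := fun k =>
    hmix _ _ (hsum (e k)) (hΓ (e k)).summable
  have hWsum : ∀ k, Summable (fun i => inner (𝕜 := ℂ) ((Λ i ∘L R) (Q (e k))) (Γ i (Q (e k)))) :=
    fun k => hmix _ _ (hΘquad (Q (e k))).summable (hΓ (Q (e k))).summable
  -- swap of sums for the two mixed quantities, and their equality
  have hPW : (∑ k, RCLike.re (∑' i, inner (𝕜 := ℂ) (Λ i (e k)) (Γ i (e k))))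
      = ∑ k, RCLike.re (∑' i, inner (𝕜 := ℂ) ((Λ i ∘L R) (Q (e k))) (Γ i (Q (e k)))) := by
    have h1 : (∑ k, ∑' i, inner (𝕜 := ℂ) (Λ i (e k)) (Γ i (e k)))
        = ∑' i, ∑ k, inner (𝕜 := ℂ) (Λ i (e k)) (Γ i (e k)) :=
      (Summable.tsum_finsetSum fun k _ => hPsum k).symm
    have h2 : (∑ k, ∑' i, inner (𝕜 := ℂ) ((Λ i ∘L R) (Q (e k))) (Γ i (Q (e k))))
        = ∑' i, ∑ k, inner (𝕜 := ℂ) ((Λ i ∘L R) (Q (e k))) (Γ i (Q (e k))) :=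
      (Summable.tsum_finsetSum fun k _ => hWsum k).symm
    have h3 : (∑ k, ∑' i, inner (𝕜 := ℂ) (Λ i (e k)) (Γ i (e k)))
        = ∑ k, ∑' i, inner (𝕜 := ℂ) ((Λ i ∘L R) (Q (e k))) (Γ i (Q (e k))) := by
      rw [h1, h2]
      exact tsum_congr htr
    calc (∑ k, RCLike.re (∑' i, inner (𝕜 := ℂ) (Λ i (e k)) (Γ i (e k))))
        = RCLike.re (∑ k, ∑' i, inner (𝕜 := ℂ) (Λ i (e k)) (Γ i (e k))) := (map_sum _ _ _).symm
      _ = RCLike.re (∑ k, ∑' i, inner (𝕜 := ℂ) ((Λ i ∘L R) (Q (e k))) (Γ i (Q (e k)))) := by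
          rw [h3]
      _ = ∑ k, RCLike.re (∑' i, inner (𝕜 := ℂ) ((Λ i ∘L R) (Q (e k))) (Γ i (Q (e k)))) :=
          map_sum _ _ _
  -- norm of Q (e k)
  have hQnorm : ∀ k, ‖Q (e k)‖ ^ 2 = RCLike.re (inner (𝕜 := ℂ) (e k) (Sh (e k))) := by
    intro k
    have h1 : Sh (e k) = Q (Q (e k)) := by rw [← hQQ, ContinuousLinearMap.mul_apply]
    rw [h1, ← hsymm Q hQsa (e k) (Q (e k))]
    exact (inner_self_eq_norm_sq _).symm
  -- global sums
  have hGΓ : (∑' i, hsNormSq (Λ i - Γ i))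
      = ∑ k, (RCLike.re (inner (𝕜 := ℂ) (e k) (S (e k))) + 1
        - 2 * RCLike.re (∑' i, inner (𝕜 := ℂ) (Λ i (e k)) (Γ i (e k)))) := by
    have h1 : (∑' i, hsNormSq (Λ i - Γ i)) = ∑' i, ∑ k, ‖(Λ i - Γ i) (e k)‖ ^ 2 := by
      simp only [hsNormSq, ← he_def]
    rw [h1, Summable.tsum_finsetSum fun k _ => (ha k).summable]
    exact Finset.sum_congr rfl fun k _ => (ha k).tsum_eq
  have hGΘ : (∑' i, hsNormSq (Λ i - Λ i ∘L R))
      = ∑ k, (RCLike.re (inner (𝕜 := ℂ) (e k) (S (e k))) + 1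
        - 2 * RCLike.re (inner (𝕜 := ℂ) (e k) (Sh (e k)))) := by
    have h1 : (∑' i, hsNormSq (Λ i - Λ i ∘L R)) = ∑' i, ∑ k, ‖(Λ i - Λ i ∘L R) (e k)‖ ^ 2 := by
      simp only [hsNormSq, ← he_def]
    rw [h1, Summable.tsum_finsetSum fun k _ => (hb k).summable]
    exact Finset.sum_congr rfl fun k _ => (hb k).tsum_eq
  -- the difference equals the nonnegative quantity D
  set D : ℝ := ∑ k, ∑' i, ‖((Λ i ∘L R) - Γ i) (Q (e k))‖ ^ 2 with hD_def
  have hDval : D = (∑' i, hsNormSq (Λ i - Γ i)) - (∑' i, hsNormSq (Λ i - Λ i ∘L R)) := by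
    rw [hGΓ, hGΘ, hD_def]
    have h1 : ∀ k ∈ (Finset.univ : Finset (Fin (Module.finrank ℂ H))),
        (∑' i, ‖((Λ i ∘L R) - Γ i) (Q (e k))‖ ^ 2)
          = 2 * RCLike.re (inner (𝕜 := ℂ) (e k) (Sh (e k)))
            - 2 * RCLike.re (∑' i, inner (𝕜 := ℂ) ((Λ i ∘L R) (Q (e k))) (Γ i (Q (e k)))) := by
      intro k _
      rw [(hc k).tsum_eq, hQnorm k]
      ring
    rw [Finset.sum_congr rfl h1, ← Finset.sum_sub_distrib]
    have h2 : ∀ k ∈ (Finset.univ : Finset (Fin (Module.finrank ℂ H))),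
        ((RCLike.re (inner (𝕜 := ℂ) (e k) (S (e k))) + 1
          - 2 * RCLike.re (∑' i, inner (𝕜 := ℂ) (Λ i (e k)) (Γ i (e k))))
        - (RCLike.re (inner (𝕜 := ℂ) (e k) (S (e k))) + 1
          - 2 * RCLike.re (inner (𝕜 := ℂ) (e k) (Sh (e k)))))
          = 2 * RCLike.re (inner (𝕜 := ℂ) (e k) (Sh (e k)))
            - 2 * RCLike.re (∑' i, inner (𝕜 := ℂ) (Λ i (e k)) (Γ i (e k))) := by
      intro k _
      ring
    rw [Finset.sum_congr rfl h2]
    rw [Finset.sum_sub_distrib, Finset.sum_sub_distrib]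
    congr 1
    rw [← Finset.mul_sum, ← Finset.mul_sum, hPW]
  have hDnonneg : 0 ≤ D := by
    refine Finset.sum_nonneg fun k _ => ?_
    exact tsum_nonneg fun i => sq_nonneg _
  constructor
  · linarith [hDnonneg, hDval]
  · constructor
    · intro heq
      have hD0 : D = 0 := by rw [hDval, heq]; ring
      intro i
      have hterm : ∀ k, ‖((Λ i ∘L R) - Γ i) (Q (e k))‖ ^ 2 = 0 := by
        intro k
        have hk0 : (∑' i, ‖((Λ i ∘L R) - Γ i) (Q (e k))‖ ^ 2) = 0 := by
          have hnn : ∀ k' ∈ Finset.univ,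
              0 ≤ ∑' i, ‖((Λ i ∘L R) - Γ i) (Q (e k'))‖ ^ 2 :=
            fun k' _ => tsum_nonneg fun i => sq_nonneg _
          exact (Finset.sum_eq_zero_iff_of_nonneg hnn).mp hD0 k (Finset.mem_univ k)
        have hle := Summable.le_tsum (hc k).summable i fun j _ => sq_nonneg _
        have hge := sq_nonneg (‖((Λ i ∘L R) - Γ i) (Q (e k))‖)
        rw [hk0] at hle
        linarith
      have hvec : ∀ k, ((Λ i ∘L R) - Γ i) (Q (e k)) = 0 := by
        intro k
        have := hterm k
        rwa [pow_eq_zero_iff (two_ne_zero), norm_eq_zero] at this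
      have hcomp : ((Λ i ∘L R) - Γ i) ∘L Q = 0 := by
        apply ContinuousLinearMap.coe_injective
        apply Module.Basis.ext e.toBasis
        intro k
        simp only [OrthonormalBasis.coe_toBasis, ContinuousLinearMap.coe_comp,
          LinearMap.comp_apply, ContinuousLinearMap.coe_coe, ContinuousLinearMap.coe_zero,
          LinearMap.zero_apply]
        exact hvec k
      have hzero : (Λ i ∘L R) - Γ i = 0 := by
        have h1 : (((Λ i ∘L R) - Γ i) ∘L Q) ∘L Qi = 0 := by
          rw [hcomp, ContinuousLinearMap.zero_comp]
        rwa [ContinuousLinearMap.comp_assoc, ← ContinuousLinearMap.mul_def Q Qi, hQQi,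
          show ((Λ i ∘L R) - Γ i) ∘L (1 : H →L[ℂ] H) = (Λ i ∘L R) - Γ i from rfl] at h1
      exact (sub_eq_zero.mp hzero).symm
    · intro hΓeq
      exact tsum_congr fun i => by rw [hΓeq i]
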